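/- Let B : 𝓚 → 𝓗 be bounded, μ ∈ ρ(A_B), μ̃ ∈ ρ(Ã_{B*}), and let λ ∈ ρ(A_B) satisfy λ ≠ μ and λ ≠ conj(μ̃). For f ∈ 𝓗 and w ∈ 𝓚 put h = S_{μ,B}f and h̃ = S̃_{μ̃,B*}w. Then ⟨(A_B−λ)⁻¹h, h̃⟩_H = [(conj(μ̃) − λ)·⟨h, h̃⟩_H + ⟨f, Γ̃₂h̃⟩_𝓗 − ⟨M_B(λ)f, w⟩_𝓚] / ((μ − λ)(conj(μ̃) − λ)). Consequently the values ⟨(A_B−λ)⁻¹h, h̃⟩ for h ∈ Ran(S_{μ,B}) and h̃ ∈ Ran(S̃_{μ̃,B*}) are determined by the M-function M_B(λ) together with the solution operators. -/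

import Mathlib

open scoped InnerProductSpace

noncomputable section

/-- `R` is the (bounded, everywhere-defined) resolvent of the restriction `A_B` of `T`
to `{u ∈ dT : Γ1 u = B (Γ2 u)}` at the spectral parameter `lam`. -/
structure IsResolventAt {H E F : Type*}
    [NormedAddCommGroup H] [InnerProductSpace ℂ H]
    [NormedAddCommGroup E] [InnerProductSpace ℂ E]
    [NormedAddCommGroup F] [InnerProductSpace ℂ F]
    (dT : Submodule ℂ H) (T : ↥dT →ₗ[ℂ] H)
    (Γ1 : ↥dT →ₗ[ℂ] E) (Γ2 : ↥dT →ₗ[ℂ] F)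
    (B : F →L[ℂ] E) (lam : ℂ) (R : H →L[ℂ] H) : Prop where
  mem : ∀ y : H, R y ∈ dT
  bc : ∀ y : H, Γ1 ⟨R y, mem y⟩ = B (Γ2 ⟨R y, mem y⟩)
  right_inv : ∀ y : H, T ⟨R y, mem y⟩ - lam • R y = y
  left_inv : ∀ u : ↥dT, Γ1 u = B (Γ2 u) → R (T u - lam • (u : H)) = (u : H)

/-- `S` is the solution operator `S_{lam,B}`: it maps `f` to the unique element of
`ker (T - lam)` with `(Γ1 - B Γ2) (S f) = f`. -/
structure IsSolOp {H E F : Type*}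
    [NormedAddCommGroup H] [InnerProductSpace ℂ H]
    [NormedAddCommGroup E] [InnerProductSpace ℂ E]
    [NormedAddCommGroup F] [InnerProductSpace ℂ F]
    (dT : Submodule ℂ H) (T : ↥dT →ₗ[ℂ] H)
    (Γ1 : ↥dT →ₗ[ℂ] E) (Γ2 : ↥dT →ₗ[ℂ] F)
    (B : F →L[ℂ] E) (lam : ℂ) (S : E →ₗ[ℂ] ↥dT) : Prop where
  in_ker : ∀ f : E, T (S f) = lam • ((S f : H))
  trace : ∀ f : E, Γ1 (S f) - B (Γ2 (S f)) = f
  inv : ∀ u : ↥dT, T u = lam • (u : H) → S (Γ1 u - B (Γ2 u)) = u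

/-- The bordered resolvent matrix elements are determined by the
M-function: for `λ ∈ ρ(A_B)` with `λ ≠ μ` and `λ ≠ conj μ̃`,
`⟨(A_B−λ)⁻¹h, h̃⟩ = [(conj μ̃ − λ)⟨h,h̃⟩ + ⟨f, Γ̃₂h̃⟩ − ⟨M_B(λ)f, w⟩] / ((μ−λ)(conj μ̃−λ))`. -/
theorem statement_6
    {H 𝓗 𝓚 : Type*}
    [NormedAddCommGroup H] [InnerProductSpace ℂ H] [CompleteSpace H]
    [NormedAddCommGroup 𝓗] [InnerProductSpace ℂ 𝓗] [CompleteSpace 𝓗]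
    [NormedAddCommGroup 𝓚] [InnerProductSpace ℂ 𝓚] [CompleteSpace 𝓚]
    (dT dT' : Submodule ℂ H)
    (T : ↥dT →ₗ[ℂ] H) (T' : ↥dT' →ₗ[ℂ] H)
    (Γ1 : ↥dT →ₗ[ℂ] 𝓗) (Γ2 : ↥dT →ₗ[ℂ] 𝓚)
    (Γt1 : ↥dT' →ₗ[ℂ] 𝓚) (Γt2 : ↥dT' →ₗ[ℂ] 𝓗)
    (green : ∀ (u : ↥dT) (v : ↥dT'),
      ⟪(v : H), T u⟫_ℂ - ⟪T' v, (u : H)⟫_ℂ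
        = ⟪Γt2 v, Γ1 u⟫_ℂ - ⟪Γt1 v, Γ2 u⟫_ℂ)
    (B : 𝓚 →L[ℂ] 𝓗) (lam μ μt : ℂ)
    (hne1 : lam ≠ μ) (hne2 : lam ≠ starRingEnd ℂ μt)
    (R : H →L[ℂ] H) (hR : IsResolventAt dT T Γ1 Γ2 B lam R)
    (Rμ : H →L[ℂ] H) (hRμ : IsResolventAt dT T Γ1 Γ2 B μ Rμ)
    (Rt : H →L[ℂ] H)
    (hRt : IsResolventAt dT' T' Γt1 Γt2 (ContinuousLinearMap.adjoint B) μt Rt)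
    (Slam : 𝓗 →ₗ[ℂ] ↥dT) (hSlam : IsSolOp dT T Γ1 Γ2 B lam Slam)
    (Sμ : 𝓗 →ₗ[ℂ] ↥dT) (hSμ : IsSolOp dT T Γ1 Γ2 B μ Sμ)
    (St : 𝓚 →ₗ[ℂ] ↥dT')
    (hSt : IsSolOp dT' T' Γt1 Γt2 (ContinuousLinearMap.adjoint B) μt St)
    (f : 𝓗) (w : 𝓚) :
    ⟪((St w : H)), R ((Sμ f : H))⟫_ℂ
      = ((starRingEnd ℂ μt - lam) * ⟪((St w : H)), ((Sμ f : H))⟫_ℂ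
          + ⟪Γt2 (St w), f⟫_ℂ - ⟪w, Γ2 (Slam f)⟫_ℂ)
        / ((μ - lam) * (starRingEnd ℂ μt - lam)) := by

  have hμ : μ - lam ≠ 0 := sub_ne_zero.mpr (Ne.symm hne1)
  have hμt : starRingEnd ℂ μt - lam ≠ 0 := sub_ne_zero.mpr (Ne.symm hne2)
  set h := Sμ f with hh
  set g := Slam f with hgdef
  set ht := St w with hhtdef
  set x : ↥dT := (μ - lam)⁻¹ • (h - g) with hx
  have t1 : Γ1 h = f + B (Γ2 h) := sub_eq_iff_eq_add.mp (hSμ.trace f)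
  have t2 : Γ1 g = f + B (Γ2 g) := sub_eq_iff_eq_add.mp (hSlam.trace f)
  have hbc : Γ1 x = B (Γ2 x) := by
    simp only [hx, map_smul, map_sub, t1, t2]
    module
  have hTx : T x - lam • ((x : H)) = (h : H) := by
    have k1 : T h = μ • (h : H) := hSμ.in_ker f
    have k2 : T g = lam • (g : H) := hSlam.in_ker f
    simp only [hx, map_smul, map_sub, SetLike.val_smul, Submodule.coe_sub, k1, k2]
    match_scalars <;> (field_simp; try ring)
  have hRh : R ((h : H)) = (x : H) := by
    have := hR.left_inv x hbc
    rw [hTx] at this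
    exact this
  have hg2 : Γt1 ht = w + (ContinuousLinearMap.adjoint B) (Γt2 ht) :=
    sub_eq_iff_eq_add.mp (hSt.trace w)
  have hG := green g ht
  rw [hSlam.in_ker f, hSt.in_ker w, t2, hg2] at hG
  simp only [inner_smul_left, inner_smul_right, inner_add_left, inner_add_right,
    ContinuousLinearMap.adjoint_inner_left] at hG
  rw [hRh]
  simp only [hx, SetLike.val_smul, Submodule.coe_sub, inner_smul_right, inner_sub_right]
  field_simp
  ring_nf
  ring_nf at hG
  simp only [← hgdef, ← hhtdef] at hG
  linear_combination hG
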